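/- The eigenvalues of the tridiagonal 5×5 matrix B = [[0,1,0,0,0],[k,0,c₂,0,0],[0,k-1,0,c₃,0],[0,0,k-c₂,0,k],[0,0,0,k-c₃,0]] are exactly ±k, ±√(k + c₂(k - c₃ - 1)), and 0. -/

import Mathlib

set_option maxHeartbeats 1000000 in
theorem stmt_12 (k c₂ c₃ : ℝ) (h1 : 1 ≤ c₂) (h2 : c₂ ≤ c₃) (h3 : c₃ ≤ k) :
    let B : Matrix (Fin 5) (Fin 5) ℝ :=
      !![0, 1, 0, 0, 0;
         k, 0, c₂, 0, 0;
         0, k - 1, 0, c₃, 0;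
         0, 0, k - c₂, 0, k;
         0, 0, 0, k - c₃, 0]
    ∀ μ : ℝ, (∃ v : Fin 5 → ℝ, v ≠ 0 ∧ B.mulVec v = μ • v) ↔
      μ ∈ ({k, -k, Real.sqrt (k + c₂ * (k - c₃ - 1)),
            -Real.sqrt (k + c₂ * (k - c₃ - 1)), 0} : Set ℝ) := by
  intro B μ
  set s : ℝ := k + c₂ * (k - c₃ - 1) with hs
  have hs0 : 0 ≤ s := by nlinarith
  have hsq : Real.sqrt s ^ 2 = s := Real.sq_sqrt hs0
  have key : (∃ v : Fin 5 → ℝ, v ≠ 0 ∧ B.mulVec v = μ • v) ↔ (B - μ • 1).det = 0 := by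
    rw [← Matrix.exists_mulVec_eq_zero_iff]
    constructor
    · rintro ⟨v, hv, hEq⟩
      exact ⟨v, hv, by
        rw [Matrix.sub_mulVec, hEq, Matrix.smul_mulVec, Matrix.one_mulVec, sub_self]⟩
    · rintro ⟨v, hv, hEq⟩
      refine ⟨v, hv, ?_⟩
      rw [Matrix.sub_mulVec, Matrix.smul_mulVec, Matrix.one_mulVec, sub_eq_zero] at hEq
      exact hEq
  have hBM : B - μ • 1 =
      !![-μ, 1, 0, 0, 0;
         k, -μ, c₂, 0, 0;
         0, k - 1, -μ, c₃, 0;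
         0, 0, k - c₂, -μ, k;
         0, 0, 0, k - c₃, -μ] := by
    ext i j
    fin_cases i <;> fin_cases j <;>
      simp [B, Matrix.one_apply]
  have hdet : (B - μ • 1).det = -(μ * (μ ^ 2 - k ^ 2) * (μ ^ 2 - s)) := by
    rw [hBM, hs]
    simp [Matrix.det_succ_row_zero, Fin.sum_univ_succ, Fin.succAbove]
    ring
  rw [key, hdet]
  have e1 : μ ^ 2 - k ^ 2 = (μ - k) * (μ + k) := by ring
  have e2 : μ ^ 2 - s = (μ - Real.sqrt s) * (μ + Real.sqrt s) := by linear_combination hsq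
  rw [e1, e2]
  simp only [Set.mem_insert_iff, Set.mem_singleton_iff, neg_eq_zero, mul_eq_zero,
    sub_eq_zero, add_eq_zero_iff_eq_neg]
  tauto
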